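/- (Asymptotics of the linear frequencies, Lemma 5.3.) (i) There exists c > 0 such that Ω_n(γ) ≥ c·n for every γ ∈ [γ₁,γ₂] and every n ∈ {1} ∪ {n̄+1, n̄+2, …}. (ii) For n ≥ n̄+1 define r(n,γ) := Ω_n(γ) − nΩ₁(γ) + 1/2, so that Ω_n(γ) = nΩ₁(γ) − 1/2 + r(n,γ). Then for every integer k ≥ 0 there exists a constant C_k such that sup over n ≥ n̄+1 and γ ∈ [γ₁,γ₂] of n·|∂_γ^k r(n,γ)| is at most C_k. -/

import Mathlib

open Real

/-- `Ω_γ := γ/(1+γ)²`. -/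
noncomputable def OmG (γ : ℝ) : ℝ := γ / (1 + γ) ^ 2

/-- `κ_n(γ) := ((γ−1)/(γ+1))ⁿ`. -/
noncomputable def kap (n : ℕ) (γ : ℝ) : ℝ := ((γ - 1) / (γ + 1)) ^ n

/-- `μ_n^+(γ) := nΩ_γ − 1/2 + κ_n(γ)/2`. -/
noncomputable def muP (n : ℕ) (γ : ℝ) : ℝ := n * OmG γ - 1 / 2 + kap n γ / 2

/-- `μ_n^-(γ) := nΩ_γ − 1/2 − κ_n(γ)/2`. -/
noncomputable def muM (n : ℕ) (γ : ℝ) : ℝ := n * OmG γ - 1 / 2 - kap n γ / 2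

/-- `Ω_n(γ) := √(μ_n^+(γ) μ_n^-(γ))`. -/
noncomputable def Om (n : ℕ) (γ : ℝ) : ℝ := Real.sqrt (muP n γ * muM n γ)

noncomputable def cOm (z : ℂ) : ℂ := z / (1 + z) ^ 2
noncomputable def ca (n : ℕ) (z : ℂ) : ℂ := n * cOm z - 1 / 2
noncomputable def cb (n : ℕ) (z : ℂ) : ℂ := ((z - 1) / (z + 1)) ^ n / 2
noncomputable def cF (n : ℕ) (z : ℂ) : ℂ := ca n z ^ 2 - cb n z ^ 2
noncomputable def cS (n : ℕ) (z : ℂ) : ℂ := cF n z ^ (1/2 : ℂ)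
noncomputable def cR (n : ℕ) (z : ℂ) : ℂ := cS n z - ca n z

lemma OmG_pos {γ : ℝ} (h : 0 < γ) : 0 < OmG γ := by
  have : (0:ℝ) < (1 + γ)^2 := by positivity
  exact div_pos h this

lemma OmG_le_quarter {γ : ℝ} (h : 0 ≤ γ) : OmG γ ≤ 1/4 := by
  have h2 : (0:ℝ) < (1 + γ)^2 := by positivity
  rw [OmG, div_le_iff₀ h2]
  nlinarith [sq_nonneg (1 - γ)]

lemma OmG_anti {γ γ' : ℝ} (h1 : 1 ≤ γ) (h : γ ≤ γ') : OmG γ' ≤ OmG γ := by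
  have h2 : (0:ℝ) < (1 + γ)^2 := by positivity
  have h3 : (0:ℝ) < (1 + γ')^2 := by nlinarith
  rw [OmG, OmG, div_le_div_iff₀ h3 h2]
  nlinarith [mul_nonneg (sub_nonneg.2 h) (by nlinarith : (0:ℝ) ≤ γ * γ' - 1)]

lemma kap_nonneg {γ : ℝ} (h : 1 ≤ γ) (n : ℕ) : 0 ≤ kap n γ :=
  pow_nonneg (div_nonneg (by linarith) (by linarith)) n

lemma kap_base_le_one {γ : ℝ} (h : 1 ≤ γ) : (γ - 1) / (γ + 1) ≤ 1 := by
  rw [div_le_one (by linarith)]; linarith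

lemma kap_le_one {γ : ℝ} (h : 1 ≤ γ) (n : ℕ) : kap n γ ≤ 1 :=
  pow_le_one₀ (div_nonneg (by linarith) (by linarith)) (kap_base_le_one h)

lemma kap_anti {γ : ℝ} (h : 1 ≤ γ) {m n : ℕ} (hmn : m ≤ n) : kap n γ ≤ kap m γ :=
  pow_le_pow_of_le_one (div_nonneg (by linarith) (by linarith)) (kap_base_le_one h) hmn

lemma om_one {x : ℝ} (hx : 0 < x) : Om 1 x = OmG x := by
  have h1 : (1 + x) ≠ 0 := by positivity
  have h2 : (x + 1) ≠ 0 := by positivity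
  have key : muP 1 x * muM 1 x = OmG x ^ 2 := by
    simp only [muP, muM, kap, OmG, Nat.cast_one, pow_one, one_mul]
    field_simp
    ring
  rw [Om, key, Real.sqrt_sq (OmG_pos hx).le]

lemma sqrt_mul_self_cpow {w : ℂ} (hw : w ≠ 0) : w ^ (1/2 : ℂ) * w ^ (1/2 : ℂ) = w := by
  rw [← Complex.cpow_add _ _ hw]
  norm_num

lemma re_cpow_half_pos {w : ℂ} (hw : 0 < w.re) : 0 < (w ^ (1/2 : ℂ)).re := by
  have hw0 : w ≠ 0 := by
    intro h; rw [h] at hw; simp at hw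
  rw [Complex.cpow_def_of_ne_zero hw0, Complex.exp_re]
  refine mul_pos (Real.exp_pos _) (Real.cos_pos_of_mem_Ioo ?_)
  have harg : |w.arg| < π/2 := Complex.abs_arg_lt_pi_div_two_iff.2 (Or.inl hw)
  have him : (Complex.log w * (1/2)).im = w.arg / 2 := by
    simp [Complex.mul_im, Complex.log_im]
    ring
  rw [him]
  obtain ⟨h1, h2⟩ := abs_lt.1 harg
  have hπ := Real.pi_pos
  constructor <;> linarith

lemma ofReal_sqrt_eq_cpow {t : ℝ} (ht : 0 < t) : ((Real.sqrt t : ℝ) : ℂ) = (t : ℂ) ^ (1/2 : ℂ) := by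
  rw [Real.sqrt_eq_rpow, Complex.ofReal_cpow ht.le]
  norm_num

lemma cauchy_bound {f : ℂ → ℂ} {c : ℂ} {M : ℝ} (R : NNReal) (hR : 0 < R) (hM : 0 ≤ M)
    (hd : DifferentiableOn ℂ f (Metric.closedBall c R))
    (hf : ∀ z ∈ Metric.closedBall c (R : ℝ), ‖f z‖ ≤ M) (k : ℕ) :
    ‖iteratedDeriv k f c‖ ≤ k.factorial * M / (R : ℝ) ^ k := by
  have hR' : (0:ℝ) < R := hR
  have hps := hd.hasFPowerSeriesOnBall hR
  have hcont : ContinuousOn (fun θ : ℝ => ‖f (circleMap c R θ)‖) (Set.uIcc 0 (2*π)) := by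
    apply ContinuousOn.norm
    apply hd.continuousOn.comp (continuous_circleMap c R).continuousOn
    intro θ _
    exact Metric.sphere_subset_closedBall (circleMap_mem_sphere c hR'.le θ)
  have hint : (∫ θ in (0:ℝ)..2*π, ‖f (circleMap c R θ)‖) ≤ 2*π*M := by
    have h1 : (∫ θ in (0:ℝ)..2*π, ‖f (circleMap c R θ)‖) ≤ ∫ _ in (0:ℝ)..2*π, M := by
      apply intervalIntegral.integral_mono_on Real.two_pi_pos.le
        (hcont.intervalIntegrable) (intervalIntegrable_const)
      intro θ _
      exact hf _ (Metric.sphere_subset_closedBall (circleMap_mem_sphere c hR'.le θ))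
    simpa using h1
  have hcoeff : ‖cauchyPowerSeries f c R k‖ ≤ M / (R:ℝ)^k := by
    refine (norm_cauchyPowerSeries_le f c R k).trans ?_
    rw [abs_of_nonneg hR'.le, inv_pow, ← div_eq_mul_inv]
    apply div_le_div_of_nonneg_right ?_ (by positivity)
    calc (2*π)⁻¹ * ∫ θ in (0:ℝ)..2*π, ‖f (circleMap c R θ)‖
        ≤ (2*π)⁻¹ * (2*π*M) := by
          apply mul_le_mul_of_nonneg_left hint (by positivity)
      _ = M := by field_simp
  have hiter : iteratedDeriv k f c = iteratedFDeriv ℂ k f c (fun _ => 1) :=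
    iteratedDeriv_eq_iteratedFDeriv
  have hfs := hps.factorial_smul (1 : ℂ) k
  rw [hiter, ← hfs]
  rw [nsmul_eq_mul]
  rw [norm_mul, Complex.norm_natCast]
  calc (k.factorial : ℝ) * ‖cauchyPowerSeries f c R k fun _ => 1‖
      ≤ (k.factorial : ℝ) * (M / (R:ℝ)^k) := by
        apply mul_le_mul_of_nonneg_left _ (by positivity)
        refine le_trans ((cauchyPowerSeries f c ↑R k).le_opNorm _) ?_
        simpa using hcoeff
    _ = k.factorial * M / (R:ℝ)^k := by ring

lemma cnr (r : ℝ) : ‖(r:ℂ)‖ = |r| := by rw [Complex.norm_real, Real.norm_eq_abs]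

lemma norm_lb {w c : ℂ} {r : ℝ} (h : ‖w - c‖ ≤ r) : ‖c‖ - r ≤ ‖w‖ := by
  have h1 := norm_sub_norm_le c w
  have h2 : ‖c - w‖ = ‖w - c‖ := norm_sub_rev c w
  linarith

lemma norm_ub {w c : ℂ} {r : ℝ} (h : ‖w - c‖ ≤ r) : ‖w‖ ≤ ‖c‖ + r := by
  have h1 := norm_sub_norm_le w c
  linarith

lemma arith_e4 {nr ρ M₀ c₀ : ℝ} (hn1 : 1 ≤ nr) (hρ0 : 0 ≤ ρ) (hM₀1 : 1 ≤ M₀)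
    (hρF : ρ * (2*M₀+1) ≤ c₀^2/2) :
    nr * (ρ * M₀) * (2*nr) + (nr * ρ / 2) * 1 ≤ c₀^2 * nr^2 / 2 := by
  have h5 : nr ≤ nr^2 := by nlinarith
  have h6 : nr^2 * (ρ * (2*M₀+1)) ≤ nr^2 * (c₀^2/2) :=
    mul_le_mul_of_nonneg_left hρF (by positivity)
  have h7 : nr * (ρ/2) ≤ nr^2 * (ρ/2) :=
    mul_le_mul_of_nonneg_right h5 (by positivity)
  nlinarith [h6, h7]

set_option maxHeartbeats 1000000 in
lemma master
    (γ₁ γ₂ c₀ M₀ ρ : ℝ) (n : ℕ) (γ : ℝ) (z : ℂ)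
    (hγ₁ : 1 < γ₁) (hγ₁₂ : γ₁ ≤ γ₂)
    (hγ : γ ∈ Set.Icc γ₁ γ₂)
    (hc₀ : 0 < c₀) (hc₀1 : c₀ ≤ 1)
    (hM₀ : 1 + γ₂ * (γ₂ + 1) ≤ M₀)
    (hρ0 : 0 < ρ) (hρ2 : ρ ≤ 1/2)
    (hρM : ρ * M₀ ≤ c₀ / 4)
    (hρF : ρ * (2 * M₀ + 1) ≤ c₀ ^ 2 / 2)
    (hn : 1 ≤ n)
    (hmuM : c₀ * n ≤ muM n γ)
    (hz : ‖z - ↑γ‖ ≤ ρ) :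
    DifferentiableAt ℂ (cR n) z ∧ ‖cR n z‖ ≤ 1 / (2 * c₀ * n) ∧ 0 < (cF n z).re := by
  obtain ⟨hγl, hγr⟩ := hγ
  have hγ1 : (1:ℝ) ≤ γ := by linarith
  have hn1 : (1:ℝ) ≤ (n:ℝ) := by exact_mod_cast hn
  have hnpos : (0:ℝ) < n := by linarith
  have hM₀1 : (1:ℝ) ≤ M₀ := by nlinarith
  -- basic norms
  have hγp1 : ‖((γ:ℂ) + 1)‖ = γ + 1 := by
    rw [show ((γ:ℂ) + 1) = ((γ + 1 : ℝ) : ℂ) by push_cast; ring, cnr,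
      abs_of_nonneg (by linarith)]
  have hγm1 : ‖((γ:ℂ) - 1)‖ = γ - 1 := by
    rw [show ((γ:ℂ) - 1) = ((γ - 1 : ℝ) : ℂ) by push_cast; ring, cnr,
      abs_of_nonneg (by linarith)]
  have hz1 : (3/2 : ℝ) ≤ ‖z + 1‖ := by
    have h1 : ‖(z+1) - ((γ:ℂ)+1)‖ ≤ ρ := by
      rw [show (z+1) - ((γ:ℂ)+1) = z - ↑γ by ring]; exact hz
    have := norm_lb h1
    rw [hγp1] at this
    linarith
  have hzp1 : γ + 1 - ρ ≤ ‖z + 1‖ := by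
    have h1 : ‖(z+1) - ((γ:ℂ)+1)‖ ≤ ρ := by
      rw [show (z+1) - ((γ:ℂ)+1) = z - ↑γ by ring]; exact hz
    have := norm_lb h1
    rw [hγp1] at this
    linarith
  have hzm1 : ‖z - 1‖ ≤ γ - 1 + ρ := by
    have h1 : ‖(z-1) - ((γ:ℂ)-1)‖ ≤ ρ := by
      rw [show (z-1) - ((γ:ℂ)-1) = z - ↑γ by ring]; exact hz
    have := norm_ub h1
    rw [hγm1] at this
    linarith
  have hz1' : z + 1 ≠ 0 := by
    intro h; rw [h] at hz1; simp at hz1; linarith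
  have hz1'' : (1 : ℂ) + z ≠ 0 := by rwa [add_comm] at hz1'
  have hznorm : ‖z‖ ≤ γ + ρ := by
    have := norm_ub hz
    rw [cnr, abs_of_nonneg (by linarith)] at this
    linarith
  have hγc1 : ((1:ℂ) + ↑γ) ≠ 0 := by
    rw [show ((1:ℂ) + ↑γ) = ((1 + γ : ℝ) : ℂ) by push_cast; ring]
    exact_mod_cast (by positivity : (1 + γ : ℝ) ≠ 0)
  have hγnorm : ‖(1:ℂ) + ↑γ‖ = 1 + γ := by
    rw [show ((1:ℂ) + ↑γ) = ((1 + γ : ℝ) : ℂ) by push_cast; ring, cnr]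
    exact abs_of_nonneg (by linarith)
  -- Omega estimates
  have hOmdiff : ‖cOm z - ↑(OmG γ)‖ ≤ ρ * M₀ := by
    have key : cOm z - ↑(OmG γ) = ((z - ↑γ) * (1 - ↑γ*z)) / ((1+z)^2 * (1+(γ:ℂ))^2) := by
      rw [cOm, OmG]
      push_cast
      field_simp
      ring
    rw [key]
    simp only [norm_div, norm_mul, norm_pow]
    have hnum1 : ‖1 - (γ:ℂ)*z‖ ≤ M₀ := by
      calc ‖1 - (γ:ℂ)*z‖ ≤ ‖(1:ℂ)‖ + ‖(γ:ℂ)*z‖ := norm_sub_le _ _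
        _ = 1 + |γ| * ‖z‖ := by rw [norm_one, norm_mul, cnr]
        _ ≤ 1 + γ₂ * (γ₂ + 1) := by
            rw [abs_of_nonneg (by linarith)]
            have h3 : ‖z‖ ≤ γ₂ + 1 := by linarith
            nlinarith [norm_nonneg z]
        _ ≤ M₀ := hM₀
    have h1 : (3/2:ℝ) ≤ ‖1 + z‖ := by rwa [add_comm] at hz1
    have e1 : (9/4:ℝ) ≤ ‖1+z‖^2 := by nlinarith
    have e2 : (4:ℝ) ≤ ‖(1:ℂ)+↑γ‖^2 := by rw [hγnorm]; nlinarith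
    have hden : (1:ℝ) ≤ ‖1+z‖^2 * ‖(1:ℂ)+↑γ‖^2 := by nlinarith
    calc ‖z - ↑γ‖ * ‖1 - ↑γ*z‖ / (‖1+z‖^2 * ‖(1:ℂ)+↑γ‖^2)
        ≤ ρ * M₀ / 1 :=
          div_le_div₀ (by positivity) (mul_le_mul hz hnum1 (norm_nonneg _) hρ0.le) one_pos hden
      _ = ρ * M₀ := by ring
  have hOmγ_pos : 0 < OmG γ := by
    rw [OmG]; positivity
  have hOmγ_le : OmG γ ≤ 1/4 := OmG_le_quarter (by linarith)
  have habs_re : |(cOm z).re - OmG γ| ≤ ρ * M₀ := by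
    have h1 : |(cOm z - ↑(OmG γ)).re| ≤ ρ * M₀ :=
      le_trans (Complex.abs_re_le_norm _) hOmdiff
    simpa using h1
  have habs_im : |(cOm z).im| ≤ ρ * M₀ := by
    have h1 : |(cOm z - ↑(OmG γ)).im| ≤ ρ * M₀ :=
      le_trans (Complex.abs_im_le_norm _) hOmdiff
    simpa using h1
  have hOm_re_lb : OmG γ - ρ * M₀ ≤ (cOm z).re := by
    have := abs_le.1 habs_re; linarith [this.1]
  have hOm_norm : ‖cOm z‖ ≤ 1/2 := by
    have := norm_ub hOmdiff
    rw [cnr, abs_of_nonneg hOmγ_pos.le] at this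
    linarith
  -- a estimates
  have hca_re_eq : (ca n z).re = n * (cOm z).re - 1/2 := by
    simp [ca, Complex.sub_re, Complex.mul_re]
  have hca_im_eq : (ca n z).im = n * (cOm z).im := by
    simp [ca, Complex.sub_im, Complex.mul_im]
  have haγ_lb : c₀ * n ≤ (n:ℝ) * OmG γ - 1/2 := by
    have := kap_nonneg hγ1 n
    simp only [muM] at hmuM
    linarith
  have hρMn : (n:ℝ) * (ρ * M₀) ≤ c₀ * n / 4 := by
    calc (n:ℝ) * (ρ * M₀) ≤ (n:ℝ) * (c₀/4) :=
          mul_le_mul_of_nonneg_left hρM (by positivity)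
      _ = c₀ * n / 4 := by ring
  have hca_re : 3/4 * (c₀ * n) ≤ (ca n z).re := by
    rw [hca_re_eq]
    have h1 : (n:ℝ) * (OmG γ - ρ * M₀) ≤ (n:ℝ) * (cOm z).re :=
      mul_le_mul_of_nonneg_left hOm_re_lb (by positivity)
    rw [mul_sub] at h1
    linarith
  have hca_norm : ‖ca n z‖ ≤ n := by
    calc ‖ca n z‖ ≤ ‖(n:ℂ) * cOm z‖ + ‖(1/2 : ℂ)‖ := norm_sub_le _ _
      _ = (n:ℝ) * ‖cOm z‖ + 1/2 := by
          rw [norm_mul, Complex.norm_natCast]; norm_num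
      _ ≤ (n:ℝ) * (1/2) + 1/2 := by
          have := mul_le_mul_of_nonneg_left hOm_norm (by positivity : (0:ℝ) ≤ (n:ℝ))
          linarith
      _ ≤ n := by linarith
  -- b estimates
  have hbase : ‖(z-1)/(z+1)‖ ≤ 1 := by
    rw [norm_div, div_le_one (by linarith)]
    linarith
  have hb_norm : ‖cb n z‖ ≤ 1/2 := by
    rw [cb, norm_div, norm_pow]
    have h2 : ‖(2:ℂ)‖ = 2 := by norm_num
    rw [h2]
    have := pow_le_one₀ (norm_nonneg ((z-1)/(z+1))) hbase (n := n)
    linarith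
  -- b difference bound
  have hγc1' : ((γ:ℂ)+1) ≠ 0 := by rwa [add_comm] at hγc1
  have hvt : ‖(z-1)/(z+1) - ↑((γ-1)/(γ+1))‖ ≤ ρ := by
    have key : (z-1)/(z+1) - (↑((γ-1)/(γ+1)) : ℂ) = 2*(z - ↑γ)/((z+1)*((γ:ℂ)+1)) := by
      push_cast
      field_simp
      ring
    rw [key]
    simp only [norm_div, norm_mul]
    have h2 : ‖(2:ℂ)‖ = 2 := by norm_num
    rw [h2]
    have hden : (2:ℝ) ≤ ‖z+1‖ * ‖(γ:ℂ)+1‖ := by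
      rw [hγp1]; nlinarith
    calc 2 * ‖z - ↑γ‖ / (‖z+1‖ * ‖(γ:ℂ)+1‖) ≤ 2 * ρ / 2 :=
          div_le_div₀ (by positivity) (by linarith) two_pos hden
      _ = ρ := by ring
  have ht0 : 0 ≤ (γ-1)/(γ+1) := div_nonneg (by linarith) (by linarith)
  have ht1 : |(γ-1)/(γ+1)| ≤ 1 := by
    rw [abs_of_nonneg ht0]; exact kap_base_le_one hγ1
  have htc : ‖((((γ-1)/(γ+1) : ℝ)) : ℂ)‖ ≤ 1 := by rw [cnr]; exact ht1
  have hbb : ‖cb n z - ↑(kap n γ / 2)‖ ≤ n * ρ / 2 := by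
    have hcast : (↑(kap n γ / 2) : ℂ) = ((((γ-1)/(γ+1) : ℝ)):ℂ)^n / 2 := by
      rw [kap]; push_cast; ring
    rw [cb, hcast, div_sub_div_same]
    rw [norm_div]
    have h2 : ‖(2:ℂ)‖ = 2 := by norm_num
    rw [h2]
    have hgeom := geom_sum₂_mul ((z-1)/(z+1)) ((((γ-1)/(γ+1) : ℝ)):ℂ) n
    have hsum : ‖∑ i ∈ Finset.range n, ((z-1)/(z+1))^i * ((((γ-1)/(γ+1) : ℝ)):ℂ)^(n-1-i)‖
        ≤ n := by
      calc ‖∑ i ∈ Finset.range n, ((z-1)/(z+1))^i * ((((γ-1)/(γ+1) : ℝ)):ℂ)^(n-1-i)‖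
          ≤ ∑ i ∈ Finset.range n, ‖((z-1)/(z+1))^i * ((((γ-1)/(γ+1) : ℝ)):ℂ)^(n-1-i)‖ :=
            norm_sum_le _ _
        _ ≤ ∑ _i ∈ Finset.range n, (1:ℝ) := by
            apply Finset.sum_le_sum
            intro i _
            rw [norm_mul, norm_pow, norm_pow]
            have e1 := pow_le_one₀ (norm_nonneg ((z-1)/(z+1))) hbase (n := i)
            have e2 := pow_le_one₀ (norm_nonneg ((((γ-1)/(γ+1) : ℝ)):ℂ)) htc (n := n-1-i)
            have e3 := pow_nonneg (norm_nonneg ((z-1)/(z+1))) i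
            have e4 := pow_nonneg (norm_nonneg ((((γ-1)/(γ+1) : ℝ)):ℂ)) (n-1-i)
            nlinarith
        _ = n := by simp
    rw [← hgeom]
    rw [norm_mul]
    have := mul_le_mul hsum hvt (norm_nonneg _) (by positivity : (0:ℝ) ≤ (n:ℝ))
    linarith
  -- F bounds
  have hmulq : (n:ℝ) * OmG γ ≤ (n:ℝ) * (1/4) := by
    exact mul_le_mul_of_nonneg_left hOmγ_le (by positivity)
  have hmul0 : (0:ℝ) ≤ (n:ℝ) * OmG γ := by positivity
  have haγ_ub : (n:ℝ) * OmG γ - 1/2 ≤ n := by linarith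
  have haγ_abs : |(n:ℝ) * OmG γ - 1/2| ≤ n := by
    rw [abs_le]; constructor
    · linarith
    · exact haγ_ub
  have hca_diff : ‖ca n z - ↑((n:ℝ) * OmG γ - 1/2)‖ ≤ n * (ρ * M₀) := by
    have key : ca n z - (↑((n:ℝ) * OmG γ - 1/2) : ℂ) = n * (cOm z - ↑(OmG γ)) := by
      rw [ca]; push_cast; ring
    rw [key, norm_mul, Complex.norm_natCast]
    exact mul_le_mul_of_nonneg_left hOmdiff (by positivity)
  have hbγ_abs : |kap n γ / 2| ≤ 1/2 := by
    rw [abs_of_nonneg (by linarith [kap_nonneg hγ1 n])]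
    linarith [kap_le_one hγ1 n]
  have hFγ_eq : muP n γ * muM n γ = ((n:ℝ) * OmG γ - 1/2)^2 - (kap n γ / 2)^2 := by
    rw [muP, muM]; ring
  have hFγ_lb : c₀^2 * n^2 ≤ muP n γ * muM n γ := by
    have h1 : muM n γ ≤ muP n γ := by
      rw [muP, muM]; linarith [kap_nonneg hγ1 n]
    have h2 : 0 < muM n γ := lt_of_lt_of_le (by positivity) hmuM
    have h3 : (c₀*n) * (c₀*n) ≤ muM n γ * muM n γ :=
      mul_le_mul hmuM hmuM (by positivity) (by positivity)
    have h4 : muM n γ * muM n γ ≤ muP n γ * muM n γ :=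
      mul_le_mul_of_nonneg_right h1 h2.le
    calc c₀^2 * n^2 = (c₀*n) * (c₀*n) := by ring
      _ ≤ muM n γ * muM n γ := h3
      _ ≤ muP n γ * muM n γ := h4
  have hF_diff : ‖cF n z - ↑(muP n γ * muM n γ)‖ ≤ c₀^2 * n^2 / 2 := by
    have hcast : (↑(muP n γ * muM n γ) : ℂ)
        = (↑((n:ℝ) * OmG γ - 1/2) : ℂ)^2 - (↑(kap n γ / 2) : ℂ)^2 := by
      rw [hFγ_eq]; push_cast; ring
    have keyd : cF n z - ↑(muP n γ * muM n γ)
        = (ca n z - ↑((n:ℝ) * OmG γ - 1/2)) * (ca n z + ↑((n:ℝ) * OmG γ - 1/2))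
          - (cb n z - ↑(kap n γ / 2)) * (cb n z + ↑(kap n γ / 2)) := by
      rw [cF, hcast]; ring
    rw [keyd]
    have e1 : ‖(ca n z - ↑((n:ℝ) * OmG γ - 1/2)) * (ca n z + ↑((n:ℝ) * OmG γ - 1/2))‖
        ≤ (n * (ρ * M₀)) * (2*n) := by
      rw [norm_mul]
      apply mul_le_mul hca_diff _ (norm_nonneg _) (by positivity)
      calc ‖ca n z + ↑((n:ℝ) * OmG γ - 1/2)‖ ≤ ‖ca n z‖ + ‖(↑((n:ℝ) * OmG γ - 1/2) : ℂ)‖ :=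
            norm_add_le _ _
        _ ≤ (n:ℝ) + (n:ℝ) := by
            rw [cnr]
            exact add_le_add hca_norm haγ_abs
        _ = 2*n := by ring
    have e2 : ‖(cb n z - ↑(kap n γ / 2)) * (cb n z + ↑(kap n γ / 2))‖ ≤ (n * ρ / 2) * 1 := by
      rw [norm_mul]
      apply mul_le_mul hbb _ (norm_nonneg _) (by positivity)
      calc ‖cb n z + ↑(kap n γ / 2)‖ ≤ ‖cb n z‖ + ‖(↑(kap n γ / 2) : ℂ)‖ := norm_add_le _ _
        _ ≤ 1/2 + 1/2 := by
            rw [cnr]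
            exact add_le_add hb_norm hbγ_abs
        _ = 1 := by ring
    have e3 := norm_sub_le ((ca n z - ↑((n:ℝ) * OmG γ - 1/2)) * (ca n z + ↑((n:ℝ) * OmG γ - 1/2)))
      ((cb n z - ↑(kap n γ / 2)) * (cb n z + ↑(kap n γ / 2)))
    have e4 : (n:ℝ) * (ρ * M₀) * (2*(n:ℝ)) + ((n:ℝ) * ρ / 2) * 1 ≤ c₀^2 * (n:ℝ)^2 / 2 :=
      arith_e4 hn1 hρ0.le hM₀1 hρF
    linarith
  have hF_re : c₀^2 * n^2 / 2 ≤ (cF n z).re := by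
    have h1 : |(cF n z - ↑(muP n γ * muM n γ)).re| ≤ c₀^2 * n^2 / 2 :=
      le_trans (Complex.abs_re_le_norm _) hF_diff
    simp only [Complex.sub_re, Complex.ofReal_re] at h1
    have := abs_le.1 h1
    linarith [this.1]
  have hF_re_pos : 0 < (cF n z).re := lt_of_lt_of_le (by positivity) hF_re
  have hF0 : cF n z ≠ 0 := by
    intro h; rw [h] at hF_re_pos; simp at hF_re_pos
  have hslit : cF n z ∈ Complex.slitPlane := Or.inl hF_re_pos
  have hS_re : 0 < (cS n z).re := by
    rw [cS]; exact re_cpow_half_pos hF_re_pos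
  -- differentiability
  have hdOm : DifferentiableAt ℂ cOm z := by
    unfold cOm
    exact differentiableAt_fun_id.div (((differentiableAt_const _).add differentiableAt_fun_id).pow 2)
      (pow_ne_zero 2 hz1'')
  have hdca : DifferentiableAt ℂ (ca n) z := by
    unfold ca
    exact ((differentiableAt_const _).mul hdOm).sub (differentiableAt_const _)
  have hdcb : DifferentiableAt ℂ (cb n) z := by
    unfold cb
    have h1 : DifferentiableAt ℂ (fun w : ℂ => (w-1)/(w+1)) z :=
      (differentiableAt_fun_id.sub (differentiableAt_const 1)).div
        (differentiableAt_fun_id.add (differentiableAt_const 1)) hz1'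
    exact (h1.pow n).div_const 2
  have hdcF : DifferentiableAt ℂ (cF n) z := by
    unfold cF
    exact (hdca.pow 2).sub (hdcb.pow 2)
  have hdcS : DifferentiableAt ℂ (cS n) z := by
    unfold cS
    exact hdcF.cpow (differentiableAt_const _) hslit
  have hdcR : DifferentiableAt ℂ (cR n) z := by
    unfold cR
    exact hdcS.sub hdca
  -- norm bound on cR
  have hcnpos : (0:ℝ) < c₀ * n := mul_pos hc₀ hnpos
  have hsum_re : 0 < (cS n z + ca n z).re := by
    rw [Complex.add_re]
    linarith
  have hsum_ne : cS n z + ca n z ≠ 0 := by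
    intro h; rw [h] at hsum_re; simp at hsum_re
  have hsq : cS n z * cS n z = ca n z^2 - cb n z^2 := by
    rw [cS, sqrt_mul_self_cpow hF0, cF]
  have hprod : (cS n z - ca n z) * (cS n z + ca n z) = -(cb n z^2) := by
    linear_combination hsq
  have hcR_eq : cR n z = -(cb n z^2) / (cS n z + ca n z) := by
    rw [cR, eq_div_iff hsum_ne]; exact hprod
  have hsum_norm : 3/4 * (c₀ * n) ≤ ‖cS n z + ca n z‖ := by
    have h1 : (cS n z + ca n z).re ≤ ‖cS n z + ca n z‖ := by
      exact Complex.re_le_norm _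
    rw [Complex.add_re] at h1
    linarith
  have hcR_norm : ‖cR n z‖ ≤ 1 / (2 * c₀ * n) := by
    rw [hcR_eq, norm_div, norm_neg, norm_pow]
    have hnum : ‖cb n z‖^2 ≤ 1/4 := by
      have h8 : ‖cb n z‖ * ‖cb n z‖ ≤ (1/2) * (1/2) :=
        mul_le_mul hb_norm hb_norm (norm_nonneg _) (by norm_num)
      rw [sq]; linarith
    have hden_pos : (0:ℝ) < 3/4 * (c₀ * n) := by positivity
    calc ‖cb n z‖^2 / ‖cS n z + ca n z‖ ≤ (1/4) / (3/4 * (c₀ * n)) :=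
          div_le_div₀ (by norm_num) hnum hden_pos hsum_norm
      _ ≤ 1 / (2 * c₀ * n) := by
          rw [div_le_div_iff₀ (by positivity) (by positivity)]
          linarith
  exact ⟨hdcR, hcR_norm, hF_re_pos⟩


lemma ca_ofReal (n : ℕ) (x : ℝ) : ca n ↑x = ↑((n:ℝ) * OmG x - 1/2) := by
  rw [ca, cOm, OmG]; push_cast; ring

lemma cb_ofReal (n : ℕ) (x : ℝ) : cb n ↑x = ↑(kap n x / 2) := by
  rw [cb, kap]; push_cast; ring

lemma cF_ofReal (n : ℕ) (x : ℝ) : cF n ↑x = ↑(muP n x * muM n x) := by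
  rw [cF, ca_ofReal, cb_ofReal, muP, muM]; push_cast; ring

lemma cR_ofReal (n : ℕ) (x : ℝ) (hpos : 0 < (cF n ↑x).re) :
    0 < muP n x * muM n x ∧ cR n ↑x = ↑(Om n x - ((n:ℝ) * OmG x - 1/2)) := by
  have h1 : 0 < muP n x * muM n x := by
    rw [cF_ofReal] at hpos
    simpa using hpos
  refine ⟨h1, ?_⟩
  have h2 : cS n ↑x = ↑(Om n x) := by
    rw [cS, cF_ofReal, Om, ofReal_sqrt_eq_cpow h1]
  rw [cR, h2, ca_ofReal]
  push_cast
  ring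

lemma key_growth (nbar : ℕ) (γ δ ω : ℝ) (hγ : 1 ≤ γ) (hδ : δ ≤ muM (nbar+1) γ)
    (hω : ω ≤ OmG γ) (hδ0 : 0 < δ) (hω0 : 0 < ω) (n : ℕ) (hn : nbar + 1 ≤ n) :
    min δ ω / ((nbar:ℝ)+1) * n ≤ muM n γ := by
  have hk : kap n γ ≤ kap (nbar+1) γ := kap_anti hγ hn
  have hcast : ((nbar:ℝ)+1) ≤ (n:ℝ) := by exact_mod_cast hn
  have hdiff : muM n γ - muM (nbar+1) γ
      = ((n:ℝ) - ((nbar:ℝ)+1)) * OmG γ - (kap n γ - kap (nbar+1) γ)/2 := by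
    rw [muM, muM]; push_cast; ring
  have hs : (0:ℝ) ≤ (n:ℝ) - ((nbar:ℝ)+1) := by linarith
  have h1 : ((n:ℝ) - ((nbar:ℝ)+1)) * ω ≤ ((n:ℝ) - ((nbar:ℝ)+1)) * OmG γ :=
    mul_le_mul_of_nonneg_left hω hs
  have h2 : δ + ((n:ℝ) - ((nbar:ℝ)+1)) * ω ≤ muM n γ := by linarith
  have hm0 : 0 < min δ ω := lt_min hδ0 hω0
  have hmδ : min δ ω ≤ δ := min_le_left _ _
  have hmω : min δ ω ≤ ω := min_le_right _ _
  have hb : (0:ℝ) < (nbar:ℝ)+1 := by positivity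
  have hb1 : (1:ℝ) ≤ (nbar:ℝ)+1 := by { have : (0:ℝ) ≤ (nbar:ℝ) := Nat.cast_nonneg _; linarith }
  rw [div_mul_eq_mul_div, div_le_iff₀ hb]
  have hkey : min δ ω * n ≤ (δ + ((n:ℝ) - ((nbar:ℝ)+1)) * ω) * ((nbar:ℝ)+1) := by
    have ha : ((n:ℝ) - ((nbar:ℝ)+1)) * min δ ω ≤ ((n:ℝ) - ((nbar:ℝ)+1)) * ω :=
      mul_le_mul_of_nonneg_left hmω hs
    nlinarith [mul_nonneg (mul_nonneg hs hm0.le) (by linarith : (0:ℝ) ≤ (nbar:ℝ)+1-1)]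
  calc min δ ω * n ≤ (δ + ((n:ℝ) - ((nbar:ℝ)+1)) * ω) * ((nbar:ℝ)+1) := hkey
    _ ≤ muM n γ * ((nbar:ℝ)+1) := mul_le_mul_of_nonneg_right h2 hb.le

lemma clamp {γ₁ γ₂ ρ' x : ℝ} (h12 : γ₁ ≤ γ₂) (hρ' : 0 ≤ ρ') (h1 : γ₁ - ρ' < x)
    (h2 : x < γ₂ + ρ') :
    max γ₁ (min x γ₂) ∈ Set.Icc γ₁ γ₂ ∧ |x - max γ₁ (min x γ₂)| ≤ ρ' := by
  refine ⟨⟨le_max_left _ _, max_le h12 (min_le_right _ _)⟩, ?_⟩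
  rcases le_total x γ₁ with h | h
  · rw [min_eq_left (le_trans h h12), max_eq_left h, abs_of_nonpos (by linarith)]
    linarith
  · rcases le_total x γ₂ with h' | h'
    · rw [min_eq_left h', max_eq_right h, sub_self, abs_zero]
      exact hρ'
    · rw [min_eq_right h', max_eq_right h12, abs_of_nonneg (by linarith)]
      linarith

set_option maxHeartbeats 1600000 in
/-- Asymptotics of the linear frequencies (Lemma 5.3).  Here
`r(n,γ) := Ω_n(γ) − n Ω₁(γ) + 1/2`, written inline. -/
theorem asymptotics
    (nbar : ℕ) (hnbar : 2 ≤ nbar)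
    (γ₁ γ₂ : ℝ) (hγ₁ : 1 < γ₁) (hγ₁₂ : γ₁ ≤ γ₂)
    (hmu : ∀ γ ∈ Set.Icc γ₁ γ₂, 0 < muM (nbar + 1) γ) :
    -- (i)
    (∃ c : ℝ, 0 < c ∧ ∀ γ ∈ Set.Icc γ₁ γ₂, ∀ n : ℕ,
      (n = 1 ∨ nbar + 1 ≤ n) → c * n ≤ Om n γ) ∧
    -- (ii)
    (∀ k : ℕ, ∃ C : ℝ, ∀ n : ℕ, nbar + 1 ≤ n → ∀ γ ∈ Set.Icc γ₁ γ₂,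
      (n : ℝ) * |iteratedDeriv k (fun x => Om n x - n * Om 1 x + 1 / 2) γ| ≤ C) := by
  have hne : (Set.Icc γ₁ γ₂).Nonempty := ⟨γ₁, by constructor <;> linarith⟩
  have hcont : ContinuousOn (muM (nbar+1)) (Set.Icc γ₁ γ₂) := by
    unfold muM OmG kap
    apply ContinuousOn.sub
    apply ContinuousOn.sub
    · refine continuousOn_const.mul (ContinuousOn.div continuousOn_id (by fun_prop) ?_)
      intro γ hγ
      have h1 := hγ.1
      exact ne_of_gt (by nlinarith : (0:ℝ) < (1+γ)^2)
    · exact continuousOn_const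
    · refine ContinuousOn.div_const (ContinuousOn.pow (ContinuousOn.div
        (continuousOn_id.sub continuousOn_const)
        (continuousOn_id.add continuousOn_const) ?_) _) _
      intro γ hγ
      have h1 := hγ.1
      exact ne_of_gt (by linarith : (0:ℝ) < γ + 1)
  obtain ⟨γ₀, hγ₀mem, hγ₀min⟩ := isCompact_Icc.exists_isMinOn hne hcont
  set δ := muM (nbar+1) γ₀ with hδdef
  have hδ0 : 0 < δ := hmu γ₀ hγ₀mem
  have hδle : ∀ γ ∈ Set.Icc γ₁ γ₂, δ ≤ muM (nbar+1) γ := fun γ hγ => hγ₀min hγ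
  set ω := OmG γ₂ with hωdef
  have hω0 : 0 < ω := OmG_pos (by linarith)
  have hωle : ∀ γ ∈ Set.Icc γ₁ γ₂, ω ≤ OmG γ :=
    fun γ hγ => OmG_anti (by linarith [hγ.1]) hγ.2
  have hω4 : ω ≤ 1/4 := OmG_le_quarter (by linarith)
  set c₀ := min δ ω / ((nbar:ℝ)+1) with hc₀def
  have hB0 : (0:ℝ) < (nbar:ℝ)+1 := by positivity
  have hB1 : (1:ℝ) ≤ (nbar:ℝ)+1 := by
    have : (0:ℝ) ≤ (nbar:ℝ) := Nat.cast_nonneg _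
    linarith
  have hc₀0 : 0 < c₀ := div_pos (lt_min hδ0 hω0) hB0
  have hc₀ω : c₀ ≤ ω := by
    have h1 : c₀ ≤ min δ ω := div_le_self (lt_min hδ0 hω0).le hB1
    exact le_trans h1 (min_le_right _ _)
  have hc₀1 : c₀ ≤ 1 := by linarith
  have hmuMkey : ∀ γ ∈ Set.Icc γ₁ γ₂, ∀ n : ℕ, nbar+1 ≤ n → c₀ * n ≤ muM n γ := by
    intro γ hγ n hn
    rw [hc₀def]
    exact key_growth nbar γ δ ω (by linarith [hγ.1]) (hδle γ hγ) (hωle γ hγ) hδ0 hω0 n hn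
  constructor
  · -- part (i)
    refine ⟨c₀, hc₀0, ?_⟩
    intro γ hγ n hn
    have hγ1 : (1:ℝ) ≤ γ := by linarith [hγ.1]
    rcases hn with rfl | hn
    · rw [om_one (by linarith : (0:ℝ) < γ)]
      have := hωle γ hγ
      simp only [Nat.cast_one, mul_one]
      linarith
    · have h1 := hmuMkey γ hγ n hn
      have hnpos : (0:ℝ) < n := by
        have : 1 ≤ n := le_trans (by omega) hn
        exact_mod_cast Nat.pos_of_ne_zero (by omega)
      have hmm : muM n γ ≤ muP n γ := by
        rw [muP, muM]; linarith [kap_nonneg hγ1 n]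
      have h2 : 0 < muM n γ := lt_of_lt_of_le (mul_pos hc₀0 hnpos) h1
      calc c₀ * n ≤ muM n γ := h1
        _ = Real.sqrt (muM n γ^2) := (Real.sqrt_sq h2.le).symm
        _ ≤ Om n γ := by
            rw [Om]
            apply Real.sqrt_le_sqrt
            nlinarith
  · -- part (ii)
    set M₀ := 1 + γ₂*(γ₂+1) with hM₀def
    have hM₀1 : (1:ℝ) ≤ M₀ := by nlinarith
    set ρ := min (1/2) (c₀^2/(4*M₀+2)) with hρdef
    have hρ0 : 0 < ρ := lt_min (by norm_num) (by positivity)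
    have hρ2 : ρ ≤ 1/2 := min_le_left _ _
    have hρb : ρ ≤ c₀^2/(4*M₀+2) := min_le_right _ _
    have h4M : (0:ℝ) < 4*M₀+2 := by linarith
    have hρF : ρ * (2*M₀+1) ≤ c₀^2/2 := by
      have heq : c₀^2/(4*M₀+2) * (2*M₀+1) = c₀^2/2 := by
        rw [div_mul_eq_mul_div, div_eq_div_iff h4M.ne' (by norm_num : (2:ℝ) ≠ 0)]
        ring
      have h5 := mul_le_mul_of_nonneg_right hρb (show (0:ℝ) ≤ 2*M₀+1 by linarith)
      linarith
    have hρM : ρ * M₀ ≤ c₀/4 := by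
      have heq : c₀^2/(4*M₀+2) * M₀ ≤ c₀/4 := by
        rw [div_mul_eq_mul_div, div_le_div_iff₀ h4M (by norm_num : (0:ℝ) < 4)]
        have hM₀0 : (0:ℝ) < M₀ := by linarith
        have h6 : (4*M₀*c₀)*c₀ ≤ (4*M₀*c₀)*1 :=
          mul_le_mul_of_nonneg_left hc₀1
            (mul_nonneg (mul_nonneg (by norm_num) hM₀0.le) hc₀0.le)
        linarith [h6, hc₀0.le]
      have h5 := mul_le_mul_of_nonneg_right hρb (show (0:ℝ) ≤ M₀ by linarith)
      linarith
    intro k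
    refine ⟨(k.factorial : ℝ) * (1/(2*c₀)) * (2/ρ)^k, ?_⟩
    intro n hn γ hγ
    have hn1 : 1 ≤ n := le_trans (by omega) hn
    have hnpos : (0:ℝ) < n := by
      exact_mod_cast Nat.pos_of_ne_zero (by omega)
    set J := Set.Ioo (γ₁ - ρ/2) (γ₂ + ρ/2) with hJdef
    set U : Set ℂ := {z : ℂ | z.re ∈ J ∧ |z.im| < ρ/2} with hUdef
    have hopen : IsOpen U := by
      have hU2 : U = Complex.re ⁻¹' J ∩ Complex.im ⁻¹' (Set.Ioo (-(ρ/2)) (ρ/2)) := by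
        ext z
        simp only [hUdef, Set.mem_setOf_eq, Set.mem_inter_iff, Set.mem_preimage, Set.mem_Ioo,
          abs_lt]
      rw [hU2]
      exact (isOpen_Ioo.preimage Complex.continuous_re).inter
        (isOpen_Ioo.preimage Complex.continuous_im)
    have hnear : ∀ z ∈ U, ∃ γ' ∈ Set.Icc γ₁ γ₂, ‖z - ↑γ'‖ ≤ ρ := by
      intro z hz
      obtain ⟨hre, him⟩ := hz
      obtain ⟨hmem, habs⟩ := clamp hγ₁₂ (by linarith : (0:ℝ) ≤ ρ/2) hre.1 hre.2
      refine ⟨_, hmem, ?_⟩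
      have h1 : ‖z - ↑(max γ₁ (min z.re γ₂))‖
          ≤ |(z - ↑(max γ₁ (min z.re γ₂))).re| + |(z - ↑(max γ₁ (min z.re γ₂))).im| := by
        exact Complex.norm_le_abs_re_add_abs_im _
      simp only [Complex.sub_re, Complex.ofReal_re, Complex.sub_im, Complex.ofReal_im,
        sub_zero] at h1
      linarith
    have hmaster : ∀ z ∈ U,
        DifferentiableAt ℂ (cR n) z ∧ ‖cR n z‖ ≤ 1 / (2 * c₀ * n) ∧ 0 < (cF n z).re := by
      intro z hz
      obtain ⟨γ', hγ', hd⟩ := hnear z hz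
      exact master γ₁ γ₂ c₀ M₀ ρ n γ' z hγ₁ hγ₁₂ hγ' hc₀0 hc₀1 hM₀def.ge hρ0 hρ2 hρM hρF hn1
        (hmuMkey γ' hγ' n hn) hd
    have hdiffU : DifferentiableOn ℂ (cR n) U :=
      fun z hz => ((hmaster z hz).1).differentiableWithinAt
    have hanaly : AnalyticOnNhd ℂ (cR n) U := hdiffU.analyticOnNhd hopen
    have hiterA : ∀ k' : ℕ, AnalyticOnNhd ℂ (iteratedDeriv k' (cR n)) U := by
      intro k'
      induction k' with
      | zero => simpa [iteratedDeriv_zero] using hanaly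
      | succ k' ih =>
        rw [iteratedDeriv_succ]
        exact ih.deriv
    have hJU : ∀ x ∈ J, (↑x : ℂ) ∈ U := by
      intro x hx
      refine ⟨by simpa using hx, ?_⟩
      simp only [Complex.ofReal_im, abs_zero]
      linarith
    have claim : ∀ k' : ℕ, ∀ x ∈ J,
        iteratedDeriv k' (fun y => Om n y - n * Om 1 y + 1 / 2) x
          = (iteratedDeriv k' (cR n) ↑x).re := by
      intro k'
      induction k' with
      | zero =>
        intro x hx
        simp only [iteratedDeriv_zero]
        have hxpos : (0:ℝ) < x := by
          have := hx.1
          rw [hJdef] at hx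
          linarith [hx.1]
        have hFre := (hmaster ↑x (hJU x hx)).2.2
        obtain ⟨hprod, hcr⟩ := cR_ofReal n x hFre
        rw [hcr, om_one hxpos]
        simp only [Complex.ofReal_re]
        ring
      | succ k' ih =>
        intro x hx
        rw [iteratedDeriv_succ, iteratedDeriv_succ]
        have hev : (iteratedDeriv k' (fun y => Om n y - n * Om 1 y + 1 / 2)) =ᶠ[nhds x]
            (fun y => (iteratedDeriv k' (cR n) ↑y).re) :=
          Filter.eventuallyEq_of_mem (isOpen_Ioo.mem_nhds hx) ih
        rw [hev.deriv_eq]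
        have hder : DifferentiableAt ℂ (iteratedDeriv k' (cR n)) ↑x :=
          ((hiterA k') ↑x (hJU x hx)).differentiableAt
        exact (hder.hasDerivAt.real_of_complex).deriv
    have hγJ : γ ∈ J := ⟨by linarith [hγ.1], by linarith [hγ.2]⟩
    set R : NNReal := ⟨ρ/2, by positivity⟩ with hRdef
    have hRpos : 0 < R := by
      rw [← NNReal.coe_lt_coe]
      exact (by linarith : (0:ℝ) < ρ/2)
    have hRρ : (R : ℝ) = ρ/2 := rfl
    have hball : ∀ z ∈ Metric.closedBall (↑γ : ℂ) (R:ℝ),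
        DifferentiableAt ℂ (cR n) z ∧ ‖cR n z‖ ≤ 1 / (2 * c₀ * n) := by
      intro z hz
      rw [Metric.mem_closedBall, dist_eq_norm, hRρ] at hz
      have := master γ₁ γ₂ c₀ M₀ ρ n γ z hγ₁ hγ₁₂ hγ hc₀0 hc₀1 hM₀def.ge hρ0 hρ2 hρM hρF hn1
        (hmuMkey γ hγ n hn) (by linarith)
      exact ⟨this.1, this.2.1⟩
    have hcau := cauchy_bound R hRpos (M := 1/(2*c₀*n)) (by positivity)
      (fun z hz => ((hball z hz).1).differentiableWithinAt) (fun z hz => (hball z hz).2) k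
    rw [claim k γ hγJ]
    have habs : |(iteratedDeriv k (cR n) ↑γ).re| ≤ ‖iteratedDeriv k (cR n) ↑γ‖ := by
      exact Complex.abs_re_le_norm _
    have hfinal : (n:ℝ) * ((k.factorial : ℝ) * (1/(2*c₀*n)) / (R:ℝ)^k)
        = (k.factorial : ℝ) * (1/(2*c₀)) * (2/ρ)^k := by
      rw [hRρ]
      have hc0' : c₀ ≠ 0 := hc₀0.ne'
      have hρ' : ρ ≠ 0 := hρ0.ne'
      have hn' : (n:ℝ) ≠ 0 := hnpos.ne'
      rw [div_pow, div_pow]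
      field_simp
    calc (n:ℝ) * |(iteratedDeriv k (cR n) ↑γ).re|
        ≤ (n:ℝ) * ‖iteratedDeriv k (cR n) ↑γ‖ :=
          mul_le_mul_of_nonneg_left habs (by positivity)
      _ ≤ (n:ℝ) * ((k.factorial : ℝ) * (1/(2*c₀*n)) / (R:ℝ)^k) :=
          mul_le_mul_of_nonneg_left hcau (by positivity)
      _ = (k.factorial : ℝ) * (1/(2*c₀)) * (2/ρ)^k := hfinal
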